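/- For every real number p < 0 one has (p²·e^{2p} − e^{2p} − 2p·eᵖ + 1)/(p²·e^{2p} − e^{2p} + 2eᵖ − 1) < (e^{2p} + 2p·eᵖ − 1)/(eᵖ − 1)². -/

import Mathlib

theorem stmt_9 (p : ℝ) (hp : p < 0) :
    (p ^ 2 * Real.exp (2 * p) - Real.exp (2 * p) - 2 * p * Real.exp p + 1) /
      (p ^ 2 * Real.exp (2 * p) - Real.exp (2 * p) + 2 * Real.exp p - 1) <
    (Real.exp (2 * p) + 2 * p * Real.exp p - 1) / (Real.exp p - 1) ^ 2 := by
  have he : Real.exp (2 * p) = Real.exp p ^ 2 := by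
    rw [two_mul, Real.exp_add, sq]
  rw [he]
  set x := Real.exp p with hx
  have hx0 : 0 < x := Real.exp_pos p
  have hx1 : x < 1 := by
    rw [hx, Real.exp_lt_one_iff]; exact hp
  -- key: x * (1 - p) < 1
  have hkey1 : x * (1 - p) < 1 := by
    have h1 : -p + 1 < Real.exp (-p) := Real.add_one_lt_exp (by linarith)
    have h2 : Real.exp (-p) = x⁻¹ := by rw [hx, Real.exp_neg]
    rw [h2] at h1
    have := mul_lt_mul_of_pos_right h1 hx0
    rw [inv_mul_cancel₀ (ne_of_gt hx0)] at this
    nlinarith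
  -- key: x * (1 + p) < 1
  have hkey2 : x * (1 + p) < 1 := by nlinarith
  have hD1 : p ^ 2 * x ^ 2 - x ^ 2 + 2 * x - 1 < 0 := by nlinarith
  have hD2 : (0:ℝ) < (x - 1) ^ 2 := by nlinarith
  rw [show (p ^ 2 * x ^ 2 - x ^ 2 - 2 * p * x + 1) / (p ^ 2 * x ^ 2 - x ^ 2 + 2 * x - 1)
      = (-(p ^ 2 * x ^ 2 - x ^ 2 - 2 * p * x + 1)) / (-(p ^ 2 * x ^ 2 - x ^ 2 + 2 * x - 1))
      from (neg_div_neg_eq _ _).symm]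
  rw [div_lt_div_iff₀ (by linarith) hD2]
  have hp2 : 0 < p ^ 2 := by nlinarith
  nlinarith [mul_pos (mul_pos hp2 (mul_pos hx0 hx0)) (by linarith : (0:ℝ) < 1 - x * (1 + p))]
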